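/- The supremum of $\|f'\|_\infty$ over all differentiable $f : [0,\infty) \to \mathbb{R}$ with $|f| \le 1$ and $f'$ Lipschitz of constant $1$, equals $2$. (Landau's inequality on the half-line.) -/

import Mathlib

open Set

def InL2HalfLine (f f' : ℝ → ℝ) : Prop :=
  (∀ t ∈ Ici (0:ℝ), HasDerivWithinAt f (f' t) (Ici 0) t) ∧
  (∀ t ∈ Ici (0:ℝ), |f t| ≤ 1) ∧
  LipschitzOnWith 1 f' (Ici 0)

lemma hderiv (t : ℝ) :
    HasDerivAt (fun s : ℝ => max (2 - s) 0 ^ 2) (-(2 * max (2 - t) 0)) t := by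
  rcases lt_trichotomy t 2 with h | h | h
  · have h1 : HasDerivAt (fun s : ℝ => (2 - s) ^ 2) (-(2 * (2 - t))) t := by
      have := ((hasDerivAt_const t (2:ℝ)).sub (hasDerivAt_id t)).pow 2
      exact this.congr_deriv (by simp)
    rw [show max (2 - t) 0 = 2 - t from max_eq_left (by linarith)]
    refine h1.congr_of_eventuallyEq ?_
    filter_upwards [eventually_lt_nhds h] with s hs
    rw [max_eq_left (by linarith)]
  · subst h
    rw [hasDerivAt_iff_isLittleO]
    have hmax : max (2 - (2:ℝ)) 0 = 0 := by norm_num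
    have hgoal : (fun s : ℝ => max (2 - s) 0 ^ 2) =o[nhds 2] fun s => s - 2 := by
      have hbig : (fun s : ℝ => max (2 - s) 0 ^ 2) =O[nhds 2] fun s => (s - 2) ^ 2 := by
        apply Asymptotics.IsBigO.of_bound 1
        filter_upwards with s
        simp only [one_mul, Real.norm_eq_abs]
        rw [abs_of_nonneg (sq_nonneg _), abs_of_nonneg (sq_nonneg _)]
        rcases le_or_gt (2 - s) 0 with hc | hc
        · rw [max_eq_right hc]; simpa using sq_nonneg (s - 2)
        · rw [max_eq_left hc.le]; nlinarith
      refine hbig.trans_isLittleO ?_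
      rw [Asymptotics.isLittleO_iff]
      intro ε hε
      filter_upwards [Metric.ball_mem_nhds (2:ℝ) hε] with s hs
      simp only [Real.norm_eq_abs, Metric.mem_ball, Real.dist_eq] at *
      rw [abs_of_nonneg (by positivity : (0:ℝ) ≤ (s-2)^2), sq]
      nlinarith [abs_nonneg (s - 2), le_abs_self (s - 2), neg_abs_le (s - 2)]
    simpa [hmax] using hgoal
  · have h1 : HasDerivAt (fun _ : ℝ => (0:ℝ)) (-(2 * max (2 - t) 0)) t := by
      rw [max_eq_right (by linarith)]; simpa using hasDerivAt_const t (0:ℝ)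
    refine h1.congr_of_eventuallyEq ?_
    filter_upwards [eventually_gt_nhds h] with s hs
    rw [max_eq_right (by linarith)]; norm_num

lemma upper_bound (f f' : ℝ → ℝ) (hmem : InL2HalfLine f f') (x : ℝ) (hx : x ∈ Ici (0:ℝ)) :
    |f' x| ≤ 2 := by
  obtain ⟨hf, hb, hlip⟩ := hmem
  set φ : ℝ → ℝ := fun t => f t - f x - (t - x) * f' x with hφdef
  have key : ‖φ (x + 2)‖ ≤ ((x + 2) - x) ^ 2 / 2 := by
    refine image_norm_le_of_norm_deriv_right_le_deriv_boundary
      (f := φ) (f' := fun t => f' t - f' x) (a := x) (b := x + 2)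
      (B := fun t => (t - x) ^ 2 / 2) (B' := fun t => t - x)
      ?_ ?_ ?_ ?_ ?_ (right_mem_Icc.2 (by linarith))
    · intro t ht
      have ht0 : t ∈ Ici (0:ℝ) := le_trans hx ht.1
      exact ((((hf t ht0).continuousWithinAt).mono (fun s hs => le_trans hx hs.1)).sub
        continuousWithinAt_const).sub
        ((continuousWithinAt_id.sub continuousWithinAt_const).mul continuousWithinAt_const)
    · intro t ht
      have h1 : HasDerivWithinAt f (f' t) (Ici t) t :=
        (hf t (le_trans hx ht.1)).mono (fun s hs => le_trans (le_trans hx ht.1) hs)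
      have h2 : HasDerivWithinAt (fun s => (s - x) * f' x) (f' x) (Ici t) t := by
        simpa using (((hasDerivAt_id t).sub_const x).mul_const (f' x)).hasDerivWithinAt
      exact (h1.sub_const (f x)).sub h2
    · simp [hφdef]
    · intro t
      have : HasDerivAt (fun s => (s - x) ^ 2 / 2) (t - x) t := by
        have := (((hasDerivAt_id t).sub_const x).pow 2).div_const 2
        exact this.congr_deriv (by simp)
      exact this
    · intro t ht
      have ht0 : t ∈ Ici (0:ℝ) := le_trans hx ht.1
      have h2 : dist (f' t) (f' x) ≤ 1 * dist t x := hlip.dist_le_mul t ht0 x hx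
      rw [Real.norm_eq_abs, ← Real.dist_eq]
      calc dist (f' t) (f' x) ≤ 1 * dist t x := h2
        _ = |t - x| := by rw [one_mul, Real.dist_eq]
        _ = t - x := abs_of_nonneg (by linarith [ht.1])
  have hfx2 : |f (x + 2)| ≤ 1 := by
    refine hb _ ?_
    simp only [mem_Ici] at hx ⊢
    linarith
  have hfx : |f x| ≤ 1 := hb _ hx
  simp only [hφdef, Real.norm_eq_abs] at key
  have h2 : |f (x + 2) - f x - (x + 2 - x) * f' x| ≤ 2 := by
    refine key.trans (le_of_eq ?_)
    ring_nf
  rw [abs_le] at *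
  constructor <;> nlinarith [h2.1, h2.2, hfx.1, hfx.2, hfx2.1, hfx2.2]

/-- **Landau's inequality on the half-line.** The supremum of `‖f'‖_∞` over
all `f` on `[0,∞)` with `|f| ≤ 1` and `f'` Lipschitz of constant `1` equals
`2` (and it is attained). -/
theorem landau_halfline :
    IsGreatest {y : ℝ | ∃ f f' : ℝ → ℝ, InL2HalfLine f f' ∧
        ∃ x ∈ Ici (0:ℝ), y = |f' x|} 2 := by
  constructor
  · refine ⟨fun t => 1 - max (2 - t) 0 ^ 2 / 2, fun t => max (2 - t) 0, ⟨?_, ?_, ?_⟩,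
      0, self_mem_Ici, by norm_num⟩
    · intro t _
      have h := ((hderiv t).div_const 2).const_sub 1
      have h2 : -(-(2 * max (2 - t) 0) / 2) = max (2 - t) 0 := by ring
      exact (h2 ▸ h).hasDerivWithinAt
    · intro t ht
      simp only [mem_Ici] at ht
      have h1 : max (2 - t) 0 ≤ 2 := by
        rcases le_total (2 - t) 0 with h | h
        · rw [max_eq_right h]; norm_num
        · rw [max_eq_left h]; linarith
      have h0 : (0:ℝ) ≤ max (2 - t) 0 := le_max_right _ _
      rw [abs_le]; constructor <;> nlinarith
    · refine LipschitzWith.lipschitzOnWith (LipschitzWith.of_dist_le_mul fun s t => ?_)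
      simp only [NNReal.coe_one, one_mul, Real.dist_eq]
      calc |max (2 - s) 0 - max (2 - t) 0| ≤ |(2 - s) - (2 - t)| := abs_max_sub_max_le_abs _ _ _
        _ = |s - t| := by rw [show (2 - s) - (2 - t) = -(s - t) by ring, abs_neg]
  · rintro y ⟨f, f', hmem, x, hx, rfl⟩
    exact upper_bound f f' hmem x hx
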